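/- arXiv:1902.04360 — 3 statements merged into one kernel-verified Lean document; each statement's English description precedes it below -/
import Mathlib

section
/- For nonnegative integers n, k, the sum Σ_{m=0}^n ((1/k!)·Σ_{l=0}^k C(k,l)(-1)^{k-l}(l - k/2)^m)·λ^{n-m}·S₁(n,m) equals T_{2,λ}(n,k) if n ≥ k and 0 if n < k. -/
noncomputable def T2 (lam x : ℝ) (n k : ℕ) : ℝ :=
  iteratedDeriv n (fun t : ℝ =>
    (k.factorial : ℝ)⁻¹ * (1 + lam * t) ^ (x / lam) *
      ((1 + lam * t) ^ (1 / (2 * lam)) - (1 + lam * t) ^ (-(1 / (2 * lam)))) ^ k) 0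

noncomputable def S1 (n k : ℕ) : ℤ :=
  (∏ i ∈ Finset.range n, (Polynomial.X - Polynomial.C (i : ℤ))).coeff k


open Finset Polynomial Real


lemma iter_sum_rpow (lam : ℝ) (K : ℕ) (a b : ℕ → ℝ) (n : ℕ) (t : ℝ)
    (ht : 0 < 1 + lam * t) :
    iteratedDeriv n (fun t => ∑ l ∈ range K, a l * (1 + lam * t) ^ (b l)) t
      = ∑ l ∈ range K, a l * (lam ^ n * ∏ i ∈ range n, (b l - i)) *
          (1 + lam * t) ^ (b l - n) := by
  induction n generalizing t with
  | zero => simp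
  | succ n ih =>
    rw [iteratedDeriv_succ]
    have hopen : IsOpen {t : ℝ | 0 < 1 + lam * t} := by
      have : Continuous fun t : ℝ => 1 + lam * t := by continuity
      exact isOpen_lt continuous_const this
    have hev : iteratedDeriv n (fun t => ∑ l ∈ range K, a l * (1 + lam * t) ^ (b l))
        =ᶠ[nhds t] (fun t => ∑ l ∈ range K, a l * (lam ^ n * ∏ i ∈ range n, (b l - i)) *
          (1 + lam * t) ^ (b l - n)) := by
      filter_upwards [hopen.mem_nhds ht] with s hs
      exact ih s hs
    rw [hev.deriv_eq]
    have hd : HasDerivAt (fun t : ℝ => ∑ l ∈ range K, a l * (lam ^ n * ∏ i ∈ range n, (b l - i)) *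
          (1 + lam * t) ^ (b l - n))
        (∑ l ∈ range K, a l * (lam ^ n * ∏ i ∈ range n, (b l - i)) *
          ((b l - n) * (1 + lam * t) ^ (b l - n - 1) * lam)) t := by
      apply HasDerivAt.fun_sum
      intro l _
      have h1 : HasDerivAt (fun t : ℝ => 1 + lam * t) lam t := by
        simpa using ((hasDerivAt_id t).const_mul lam).const_add 1
      have h2 : HasDerivAt (fun y : ℝ => y ^ (b l - n)) ((b l - n) * (1 + lam * t) ^ (b l - n - 1))
          (1 + lam * t) := Real.hasDerivAt_rpow_const (Or.inl (ne_of_gt ht))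
      have := (h2.comp t h1).const_mul (a l * (lam ^ n * ∏ i ∈ range n, (b l - i)))
      exact this
    rw [hd.deriv]
    refine Finset.sum_congr rfl fun l _ => ?_
    rw [prod_range_succ]
    have he : b l - n - 1 = b l - (n + 1 : ℕ) := by push_cast; ring
    rw [he]
    push_cast
    ring

-- pointwise expansion
lemma expand_pt (lam : ℝ) (hlam : lam ≠ 0) (k : ℕ) (t : ℝ) (ht : 0 < 1 + lam * t) :
    (k.factorial : ℝ)⁻¹ * (1 + lam * t) ^ ((0:ℝ) / lam) *
      ((1 + lam * t) ^ (1 / (2 * lam)) - (1 + lam * t) ^ (-(1 / (2 * lam)))) ^ k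
    = ∑ l ∈ range (k + 1),
        ((k.factorial : ℝ)⁻¹ * (k.choose l : ℝ) * (-1) ^ (k - l)) *
          (1 + lam * t) ^ ((((l : ℝ) - (k : ℝ) / 2) / lam)) := by
  set A : ℝ := 1 + lam * t with hA
  rw [sub_pow]
  rw [zero_div, Real.rpow_zero, mul_one, Finset.mul_sum]
  refine Finset.sum_congr rfl fun l hl => ?_
  rw [Finset.mem_range] at hl
  have hll : l ≤ k := Nat.lt_succ_iff.mp hl
  have h1 : (A ^ (1 / (2 * lam))) ^ l = A ^ ((l : ℝ) / (2 * lam)) := by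
    rw [← Real.rpow_natCast (A ^ (1 / (2 * lam))) l, ← Real.rpow_mul ht.le]
    ring_nf
  have h2 : (A ^ (-(1 / (2 * lam)))) ^ (k - l) = A ^ (-(((k - l : ℕ) : ℝ) / (2 * lam))) := by
    rw [← Real.rpow_natCast (A ^ (-(1 / (2 * lam)))) (k - l), ← Real.rpow_mul ht.le]
    ring_nf
  rw [h1, h2]
  have hadd : A ^ ((l : ℝ) / (2 * lam)) * A ^ (-(((k - l : ℕ) : ℝ) / (2 * lam)))
      = A ^ ((l : ℝ) / (2 * lam) + -(((k - l : ℕ) : ℝ) / (2 * lam))) :=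
    (Real.rpow_add ht _ _).symm
  rw [mul_assoc ((-1:ℝ) ^ (l + k)), hadd]
  have hcast : ((k - l : ℕ) : ℝ) = (k : ℝ) - l := by
    push_cast [hll]; ring
  have hexp : (l : ℝ) / (2 * lam) + -(((k - l : ℕ) : ℝ) / (2 * lam))
      = ((l : ℝ) - (k : ℝ) / 2) / lam := by
    rw [hcast]; field_simp; ring
  rw [hexp]
  have hsign : ((-1 : ℝ)) ^ (l + k) = (-1) ^ (k - l) := by
    rw [show l + k = (k - l) + 2*l by omega, pow_add, pow_mul]
    simp
  rw [hsign]
  ring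

lemma T2_formula (lam : ℝ) (hlam : lam ≠ 0) (n k : ℕ) :
    T2 lam 0 n k = ∑ l ∈ range (k + 1),
        ((k.factorial : ℝ)⁻¹ * (k.choose l : ℝ) * (-1) ^ (k - l)) *
          (lam ^ n * ∏ i ∈ range n, ((((l : ℝ) - (k : ℝ) / 2) / lam) - i)) := by
  have hopen : IsOpen {t : ℝ | 0 < 1 + lam * t} := by
    have : Continuous fun t : ℝ => 1 + lam * t := by continuity
    exact isOpen_lt continuous_const this
  have h0 : (0:ℝ) ∈ {t : ℝ | 0 < 1 + lam * t} := by norm_num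
  have hev : (fun t : ℝ =>
      (k.factorial : ℝ)⁻¹ * (1 + lam * t) ^ ((0:ℝ) / lam) *
        ((1 + lam * t) ^ (1 / (2 * lam)) - (1 + lam * t) ^ (-(1 / (2 * lam)))) ^ k)
      =ᶠ[nhds 0] (fun t => ∑ l ∈ range (k + 1),
        ((k.factorial : ℝ)⁻¹ * (k.choose l : ℝ) * (-1) ^ (k - l)) *
          (1 + lam * t) ^ ((((l : ℝ) - (k : ℝ) / 2) / lam))) := by
    filter_upwards [hopen.mem_nhds h0] with s hs
    exact expand_pt lam hlam k s hs
  rw [T2, hev.iteratedDeriv_eq n, iter_sum_rpow lam (k+1) _ _ n 0 (by norm_num)]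
  refine Finset.sum_congr rfl fun l _ => ?_
  rw [show (1 : ℝ) + lam * 0 = 1 by ring, Real.one_rpow, mul_one]

lemma S1_cast (n m : ℕ) :
    (S1 n m : ℝ) = (∏ i ∈ range n, (X - C (i : ℝ))).coeff m := by
  have : (∏ i ∈ range n, (X - C (i : ℝ)))
      = (∏ i ∈ range n, (X - C (i : ℤ))).map (Int.castRingHom ℝ) := by
    rw [Polynomial.map_prod]
    refine Finset.prod_congr rfl fun i _ => ?_
    simp
  rw [this, Polynomial.coeff_map, S1]
  simp

lemma natDegree_prod_lin (R : Type*) [CommRing R] [Nontrivial R] (n : ℕ) (c : ℕ → R) :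
    (∏ i ∈ range n, (X - C (c i))).natDegree ≤ n := by
  have h := Polynomial.natDegree_prod_le (range n) (fun i => X - C (c i))
  have h2 : ∑ i ∈ range n, (X - C (c i)).natDegree ≤ n := by
    have : ∀ i ∈ range n, (X - C (c i)).natDegree = 1 := fun i _ => natDegree_X_sub_C _
    rw [Finset.sum_congr rfl this]
    simp
  exact h.trans h2

lemma stirling_sum_eq_prod (lam : ℝ) (hlam : lam ≠ 0) (n : ℕ) (c : ℝ) :
    ∑ m ∈ range (n + 1), (S1 n m : ℝ) * lam ^ (n - m) * c ^ m
      = ∏ i ∈ range n, (c - i * lam) := by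
  have hdeg : (∏ i ∈ range n, (X - C ((i : ℕ) : ℝ))).natDegree < n + 1 :=
    Nat.lt_succ_of_le (natDegree_prod_lin ℝ n _)
  have heval := Polynomial.eval_eq_sum_range' hdeg (c / lam)
  have hevalprod : (∏ i ∈ range n, (X - C ((i : ℕ) : ℝ))).eval (c / lam)
      = ∏ i ∈ range n, (c / lam - i) := by
    rw [Polynomial.eval_prod]; simp
  have key : ∑ m ∈ range (n + 1), (S1 n m : ℝ) * lam ^ (n - m) * c ^ m
      = lam ^ n * ∑ m ∈ range (n + 1),
          (∏ i ∈ range n, (X - C ((i : ℕ) : ℝ))).coeff m * (c / lam) ^ m := by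
    rw [Finset.mul_sum]
    refine Finset.sum_congr rfl fun m hm => ?_
    rw [Finset.mem_range, Nat.lt_succ_iff] at hm
    rw [S1_cast]
    rw [pow_sub₀ lam hlam hm, div_pow]
    field_simp
  rw [key, ← heval, hevalprod]
  have hr : ∏ i ∈ range n, (c - (i:ℝ) * lam) = ∏ i ∈ range n, (lam * (c / lam - (i:ℝ))) :=
    Finset.prod_congr rfl fun i _ => by field_simp
  rw [hr, Finset.prod_mul_distrib, Finset.prod_const, Finset.card_range]

lemma coeff_XD (p : Polynomial ℝ) (l : ℕ) :
    (X * derivative p).coeff l = p.coeff l * l := by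
  cases l with
  | zero => simp
  | succ m =>
    rw [Polynomial.coeff_X_mul, Polynomial.coeff_derivative]
    push_cast; ring

lemma coeff_XD_iter (p : Polynomial ℝ) (m l : ℕ) :
    ((fun q => X * derivative q)^[m] p).coeff l = p.coeff l * (l : ℝ) ^ m := by
  induction m generalizing p with
  | zero => simp
  | succ m ih =>
    rw [Function.iterate_succ_apply, ih, coeff_XD]
    ring

lemma natDegree_XD_le (p : Polynomial ℝ) :
    (X * derivative p).natDegree ≤ p.natDegree := by
  by_cases h : derivative p = 0
  · simp [h]
  · refine le_trans (Polynomial.natDegree_mul_le) ?_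
    have h1 : (X : Polynomial ℝ).natDegree = 1 := natDegree_X
    have h2 := Polynomial.natDegree_derivative_lt (p := p) ?_
    · omega
    · intro hc
      obtain ⟨a, rfl⟩ := Polynomial.natDegree_eq_zero.mp hc
      exact h (derivative_C)

lemma natDegree_XD_iter_le (p : Polynomial ℝ) (m : ℕ) :
    ((fun q => X * derivative q)^[m] p).natDegree ≤ p.natDegree := by
  induction m with
  | zero => simp
  | succ m ih => rw [Function.iterate_succ_apply']; exact le_trans (natDegree_XD_le _) ih

lemma dvd_XD_iter (k j : ℕ) :
    (X - C (1:ℝ)) ^ (k - j) ∣ (fun q => X * derivative q)^[j] ((X - C (1:ℝ)) ^ k) := by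
  induction j with
  | zero => simp
  | succ j ih =>
    rw [Function.iterate_succ_apply']
    obtain ⟨r, hr⟩ := ih
    rcases Nat.eq_zero_or_pos (k - j) with h0 | hpos
    · rw [show k - (j+1) = 0 by omega, pow_zero]
      exact one_dvd _
    · obtain ⟨s, hs⟩ : ∃ s, k - j = s + 1 := ⟨k - j - 1, by omega⟩
      have hkj : k - (j + 1) = s := by omega
      rw [hr, hs, hkj]
      have hder : (X - C (1:ℝ)) ^ s ∣ derivative ((X - C (1:ℝ)) ^ (s+1) * r) := by
        rw [derivative_mul, derivative_pow]
        refine dvd_add ?_ ?_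
        · simp only [Nat.add_sub_cancel]
          exact ((dvd_mul_left _ _).mul_right _).mul_right r
        · exact (pow_dvd_pow _ (Nat.le_succ s)).mul_right _
      exact hder.mul_left X

lemma alt_sum_pow (k m : ℕ) (hm : m < k) :
    ∑ l ∈ range (k + 1), (k.choose l : ℝ) * (-1) ^ (k - l) * (l : ℝ) ^ m = 0 := by
  set P : Polynomial ℝ := (X - C 1) ^ k with hP
  have hcoeff : ∀ l, P.coeff l = (k.choose l : ℝ) * (-1) ^ (k - l) := by
    intro l
    rw [hP, show (X - C (1:ℝ)) = X + C (-1) by simp [sub_eq_add_neg], coeff_X_add_C_pow]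
    ring
  set Q := (fun q : Polynomial ℝ => X * derivative q)^[m] P with hQ
  have h1 : ∀ l, Q.coeff l = P.coeff l * (l:ℝ)^m := coeff_XD_iter P m
  have hdeg : Q.natDegree < k + 1 := by
    have h3 := natDegree_XD_iter_le P m
    have hPdeg : P.natDegree ≤ k := by
      rw [hP]
      refine le_trans (Polynomial.natDegree_pow_le) ?_
      rw [natDegree_X_sub_C, mul_one]
    rw [← hQ] at h3
    omega
  have heval : Q.eval 1 = ∑ l ∈ range (k+1), Q.coeff l := by
    rw [Polynomial.eval_eq_sum_range' hdeg]; simp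
  have hdvd : (X - C (1:ℝ)) ∣ Q := by
    have h4 := dvd_XD_iter k m
    rw [← hP, ← hQ] at h4
    exact dvd_trans (dvd_pow_self _ (by omega)) h4
  obtain ⟨r, hr⟩ := hdvd
  have hz : Q.eval 1 = 0 := by rw [hr]; simp
  calc ∑ l ∈ range (k + 1), (k.choose l : ℝ) * (-1) ^ (k - l) * (l : ℝ) ^ m
      = ∑ l ∈ range (k+1), Q.coeff l := by
        refine Finset.sum_congr rfl fun l _ => ?_
        rw [h1, hcoeff]
    _ = 0 := by rw [← heval, hz]

lemma alt_sum_poly (k : ℕ) (p : Polynomial ℝ) (hdeg : p.natDegree < k) :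
    ∑ l ∈ range (k + 1), (k.choose l : ℝ) * (-1) ^ (k - l) * p.eval (l:ℝ) = 0 := by
  have : ∀ l : ℕ, p.eval (l:ℝ) = ∑ m ∈ range k, p.coeff m * (l:ℝ) ^ m :=
    fun l => Polynomial.eval_eq_sum_range' hdeg _
  calc ∑ l ∈ range (k + 1), (k.choose l : ℝ) * (-1) ^ (k - l) * p.eval (l:ℝ)
      = ∑ m ∈ range k, p.coeff m *
          ∑ l ∈ range (k + 1), (k.choose l : ℝ) * (-1) ^ (k - l) * (l:ℝ) ^ m := by
        simp_rw [this, Finset.mul_sum]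
        rw [Finset.sum_comm]
        refine Finset.sum_congr rfl fun m _ => Finset.sum_congr rfl fun l _ => by ring
    _ = 0 := by
        refine Finset.sum_eq_zero fun m hm => ?_
        rw [alt_sum_pow k m (Finset.mem_range.mp hm)]
        ring


theorem T2_num_via_stirling_first (lam : ℝ) (hlam : lam ≠ 0) (n k : ℕ) :
    ∑ m ∈ Finset.range (n + 1),
        ((k.factorial : ℝ)⁻¹ *
            ∑ l ∈ Finset.range (k + 1),
              (k.choose l : ℝ) * (-1) ^ (k - l) * ((l : ℝ) - (k : ℝ) / 2) ^ m)
          * lam ^ (n - m) * (S1 n m : ℝ)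
      = if k ≤ n then T2 lam 0 n k else 0 := by
  have hV : ∑ m ∈ Finset.range (n + 1),
        ((k.factorial : ℝ)⁻¹ *
            ∑ l ∈ Finset.range (k + 1),
              (k.choose l : ℝ) * (-1) ^ (k - l) * ((l : ℝ) - (k : ℝ) / 2) ^ m)
          * lam ^ (n - m) * (S1 n m : ℝ)
      = ∑ l ∈ range (k + 1), ((k.factorial : ℝ)⁻¹ * (k.choose l : ℝ) * (-1) ^ (k - l)) *
          ∏ i ∈ range n, (((l : ℝ) - (k : ℝ) / 2) - i * lam) := by
    have hswap : ∑ m ∈ Finset.range (n + 1),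
        ((k.factorial : ℝ)⁻¹ *
            ∑ l ∈ Finset.range (k + 1),
              (k.choose l : ℝ) * (-1) ^ (k - l) * ((l : ℝ) - (k : ℝ) / 2) ^ m)
          * lam ^ (n - m) * (S1 n m : ℝ)
      = ∑ l ∈ range (k + 1), ((k.factorial : ℝ)⁻¹ * (k.choose l : ℝ) * (-1) ^ (k - l)) *
          ∑ m ∈ range (n + 1), (S1 n m : ℝ) * lam ^ (n - m) * ((l : ℝ) - (k : ℝ) / 2) ^ m := by
      simp_rw [Finset.mul_sum, Finset.sum_mul]
      rw [Finset.sum_comm]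
      exact Finset.sum_congr rfl fun l _ => Finset.sum_congr rfl fun m _ => by ring
    rw [hswap]
    exact Finset.sum_congr rfl fun l _ => by
      rw [stirling_sum_eq_prod lam hlam n (((l : ℝ) - (k : ℝ) / 2))]
  have hT2 : T2 lam 0 n k
      = ∑ l ∈ range (k + 1), ((k.factorial : ℝ)⁻¹ * (k.choose l : ℝ) * (-1) ^ (k - l)) *
          ∏ i ∈ range n, (((l : ℝ) - (k : ℝ) / 2) - i * lam) := by
    rw [T2_formula lam hlam n k]
    refine Finset.sum_congr rfl fun l _ => ?_
    congr 1
    have hr : ∏ i ∈ range n, (((l : ℝ) - (k : ℝ) / 2) - (i:ℝ) * lam)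
        = ∏ i ∈ range n, (lam * ((((l : ℝ) - (k : ℝ) / 2) / lam) - (i:ℝ))) :=
      Finset.prod_congr rfl fun i _ => by field_simp
    rw [hr, Finset.prod_mul_distrib, Finset.prod_const, Finset.card_range]
  by_cases hkn : k ≤ n
  · rw [if_pos hkn, hV, hT2]
  · rw [if_neg hkn, hV]
    push_neg at hkn
    set p : Polynomial ℝ := ∏ i ∈ range n, (X - C ((k : ℝ) / 2 + i * lam)) with hp
    have hdeg : p.natDegree < k := lt_of_le_of_lt (natDegree_prod_lin ℝ n _) hkn
    have hev : ∀ l : ℕ, p.eval (l:ℝ) = ∏ i ∈ range n, (((l : ℝ) - (k : ℝ) / 2) - i * lam) := by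
      intro l
      rw [hp, Polynomial.eval_prod]
      refine Finset.prod_congr rfl fun i _ => ?_
      simp
      ring
    calc ∑ l ∈ range (k + 1), ((k.factorial : ℝ)⁻¹ * (k.choose l : ℝ) * (-1) ^ (k - l)) *
          ∏ i ∈ range n, (((l : ℝ) - (k : ℝ) / 2) - i * lam)
        = (k.factorial : ℝ)⁻¹ * ∑ l ∈ range (k + 1),
            (k.choose l : ℝ) * (-1) ^ (k - l) * p.eval (l:ℝ) := by
          rw [Finset.mul_sum]
          exact Finset.sum_congr rfl fun l _ => by rw [hev]; ring
      _ = 0 := by rw [alt_sum_poly k p hdeg, mul_zero]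
end

section
/- For nonnegative integers n, k, the expression (n!/k!)·Σ_{l=0}^k C(k,l)·(-1)^{k-l}·C_λ(l - k/2, n) equals T_{2,λ}(n,k) if n ≥ k and 0 if n < k, where C_λ(x,n) = (x)_{n,λ}/n! is the λ-binomial coefficient. -/
noncomputable def dfall (lam x : ℝ) (n : ℕ) : ℝ := ∏ i ∈ Finset.range n, (x - i * lam)

open Filter Polynomial Finset

private lemma dfall_succ (lam x : ℝ) (n : ℕ) :
    dfall lam x (n + 1) = x * dfall lam (x - lam) n := by
  rw [dfall, Finset.prod_range_succ', dfall]
  rw [mul_comm]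
  congr 1
  · simp
  · apply Finset.prod_congr rfl
    intro i _
    push_cast
    ring

/-- Main analytic lemma: iterated derivatives at 0 of eventual linear combinations of
`t ↦ (1 + lam t) ^ c` are given by `dfall`. -/
private lemma iter_aux (lam : ℝ) :
    ∀ (n m : ℕ) (a c : ℕ → ℝ) (f : ℝ → ℝ),
      (f =ᶠ[nhds (0 : ℝ)] fun t => ∑ l ∈ Finset.range m, a l * (1 + lam * t) ^ (c l)) →
      iteratedDeriv n f 0 = ∑ l ∈ Finset.range m, a l * dfall lam (lam * c l) n := by
  intro n
  induction n with
  | zero =>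
    intro m a c f hf
    simp only [iteratedDeriv_zero]
    rw [hf.self_of_nhds]
    simp [dfall]
  | succ n ih =>
    intro m a c f hf
    rw [iteratedDeriv_succ']
    have hS : {t : ℝ | 0 < 1 + lam * t} ∈ nhds (0 : ℝ) := by
      apply IsOpen.mem_nhds
      · exact isOpen_lt continuous_const (by continuity)
      · simp
    have hderiv : deriv f =ᶠ[nhds (0 : ℝ)]
        fun t => ∑ l ∈ Finset.range m, (a l * (c l * lam)) * (1 + lam * t) ^ (c l - 1) := by
      filter_upwards [hf.deriv, hS] with t ht hpos
      rw [ht]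
      have H : HasDerivAt (fun t => ∑ l ∈ Finset.range m, a l * (1 + lam * t) ^ (c l))
          (∑ l ∈ Finset.range m, (a l * (c l * lam)) * (1 + lam * t) ^ (c l - 1)) t := by
        apply HasDerivAt.fun_sum
        intro l _
        have h1 : HasDerivAt (fun t : ℝ => 1 + lam * t) lam t := by
          simpa using ((hasDerivAt_id t).const_mul lam).const_add (1 : ℝ)
        have h2 := (Real.hasDerivAt_rpow_const (x := 1 + lam * t) (p := c l)
          (Or.inl (ne_of_gt hpos))).comp t h1
        convert h2.const_mul (a l) using 1
        exacts [rfl, rfl, by ring]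
      exact H.deriv
    rw [ih m _ _ _ hderiv]
    apply Finset.sum_congr rfl
    intro l _
    have harg : lam * (c l - 1) = lam * c l - lam := by ring
    rw [dfall_succ, ← harg]
    ring

/-- `T2` at `x = 0` equals the finite alternating sum of `dfall`s. -/
private lemma T2_eq (lam : ℝ) (hlam : lam ≠ 0) (n k : ℕ) :
    T2 lam 0 n k = ∑ l ∈ Finset.range (k + 1),
      ((k.factorial : ℝ)⁻¹ * ((-1) ^ (l + k) * (k.choose l : ℝ))) *
        dfall lam ((l : ℝ) - (k : ℝ) / 2) n := by
  have hS : {t : ℝ | 0 < 1 + lam * t} ∈ nhds (0 : ℝ) := by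
    apply IsOpen.mem_nhds
    · exact isOpen_lt continuous_const (by continuity)
    · simp
  set a : ℕ → ℝ := fun l => (k.factorial : ℝ)⁻¹ * ((-1) ^ (l + k) * (k.choose l : ℝ)) with ha
  set c : ℕ → ℝ := fun l => ((l : ℝ) - (k : ℝ) / 2) / lam with hc
  have key : (fun t : ℝ =>
      (k.factorial : ℝ)⁻¹ * (1 + lam * t) ^ ((0 : ℝ) / lam) *
        ((1 + lam * t) ^ (1 / (2 * lam)) - (1 + lam * t) ^ (-(1 / (2 * lam)))) ^ k)
      =ᶠ[nhds (0 : ℝ)] fun t => ∑ l ∈ Finset.range (k + 1), a l * (1 + lam * t) ^ (c l) := by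
    filter_upwards [hS] with t ht
    rw [zero_div, Real.rpow_zero, mul_one, sub_pow, Finset.mul_sum]
    apply Finset.sum_congr rfl
    intro l hl
    have hl' : l ≤ k := Nat.lt_succ_iff.mp (Finset.mem_range.mp hl)
    have hA : ((1 + lam * t) ^ (1 / (2 * lam))) ^ l
        = (1 + lam * t) ^ ((1 / (2 * lam)) * (l : ℝ)) := by
      rw [Real.rpow_mul (le_of_lt ht), Real.rpow_natCast]
    have hB : ((1 + lam * t) ^ (-(1 / (2 * lam)))) ^ (k - l)
        = (1 + lam * t) ^ ((-(1 / (2 * lam))) * ((k : ℝ) - (l : ℝ))) := by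
      rw [show (k : ℝ) - (l : ℝ) = ((k - l : ℕ) : ℝ) from (Nat.cast_sub hl').symm]
      rw [Real.rpow_mul (le_of_lt ht), Real.rpow_natCast]
    have hAB : (1 + lam * t) ^ ((1 / (2 * lam)) * (l : ℝ)) *
          (1 + lam * t) ^ ((-(1 / (2 * lam))) * ((k : ℝ) - (l : ℝ)))
        = (1 + lam * t) ^ (c l) := by
      rw [← Real.rpow_add ht]
      congr 1
      rw [hc]
      field_simp
      ring
    rw [hA, hB]
    rw [ha]
    simp only []
    rw [← hAB]
    ring
  have := iter_aux lam n (k + 1) a c _ key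
  rw [T2, this]
  apply Finset.sum_congr rfl
  intro l _
  have harg : lam * c l = (l : ℝ) - (k : ℝ) / 2 := by
    rw [hc]; field_simp
  rw [harg]

/-- Forward difference of a polynomial evaluation. -/
private lemma fwdDiff_poly (P : Polynomial ℝ) :
    fwdDiff (1 : ℝ) (fun x => P.eval x) = fun x => (Polynomial.taylor 1 P - P).eval x := by
  funext x
  simp [fwdDiff, Polynomial.taylor_eval]

private lemma fwdDiff_iter_poly_degree_lt :
    ∀ (k : ℕ) (P : Polynomial ℝ), P.degree < (k : ℕ) →
      (fwdDiff (1 : ℝ))^[k] (fun x => P.eval x) = fun _ => 0 := by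
  intro k
  induction k with
  | zero =>
    intro P hP
    have h0 : P = 0 := by
      rw [← Polynomial.degree_eq_bot, ← Nat.WithBot.lt_zero_iff]
      exact_mod_cast hP
    subst h0
    simp
  | succ k ih =>
    intro P hP
    rw [Function.iterate_succ_apply, fwdDiff_poly]
    by_cases hP0 : P = 0
    · subst hP0
      have : (Polynomial.taylor (1 : ℝ) 0 - 0 : Polynomial ℝ) = 0 := by simp
      rw [this]
      exact ih 0 (by simp [Polynomial.degree_zero])
    · apply ih
      have htne : Polynomial.taylor (1 : ℝ) P ≠ 0 := by
        intro h
        exact hP0 (Polynomial.taylor_injective (1 : ℝ)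
          (show Polynomial.taylor (1 : ℝ) P = Polynomial.taylor (1 : ℝ) 0 by
            rw [h, map_zero]))
      have hdeg : (Polynomial.taylor (1 : ℝ) P).degree = P.degree := by
        rw [Polynomial.degree_eq_natDegree htne, Polynomial.degree_eq_natDegree hP0,
          Polynomial.natDegree_taylor]
      have hlc : (Polynomial.taylor (1 : ℝ) P).leadingCoeff = P.leadingCoeff := by
        rw [Polynomial.taylor_apply, Polynomial.leadingCoeff_comp (by
          rw [Polynomial.natDegree_X_add_C]; exact one_ne_zero)]
        have h1 : ((Polynomial.X : Polynomial ℝ) + Polynomial.C 1).leadingCoeff = 1 :=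
          (Polynomial.monic_X_add_C (1 : ℝ))
        rw [h1, one_pow, mul_one]
      have := Polynomial.degree_sub_lt hdeg htne hlc
      calc (Polynomial.taylor (1 : ℝ) P - P).degree
          < (Polynomial.taylor (1 : ℝ) P).degree := this
        _ = P.degree := hdeg
        _ ≤ (k : WithBot ℕ) := by
            have : P.degree < ((k + 1 : ℕ) : WithBot ℕ) := hP
            exact Order.le_of_lt_succ (by exact_mod_cast this)

/-- The alternating binomial sum of `dfall` values vanishes when `n < k`. -/
private lemma sum_vanish (lam : ℝ) (n k : ℕ) (hnk : n < k) :
    ∑ l ∈ Finset.range (k + 1),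
      (k.choose l : ℝ) * (-1) ^ (k - l) * dfall lam ((l : ℝ) - (k : ℝ) / 2) n = 0 := by
  set P : Polynomial ℝ := ∏ i ∈ Finset.range n, (Polynomial.X - Polynomial.C ((i : ℝ) * lam))
    with hPdef
  have hPeval : ∀ x : ℝ, P.eval x = dfall lam x n := by
    intro x
    rw [hPdef, Polynomial.eval_prod, dfall]
    apply Finset.prod_congr rfl
    intro i _
    simp
  have hPdeg : P.degree = (n : WithBot ℕ) := by
    rw [hPdef, Polynomial.degree_prod]
    calc ∑ i ∈ Finset.range n, (Polynomial.X - Polynomial.C ((i : ℝ) * lam)).degree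
        = ∑ _i ∈ Finset.range n, (1 : WithBot ℕ) :=
          Finset.sum_congr rfl fun i _ => Polynomial.degree_X_sub_C _
      _ = (n : WithBot ℕ) := by simp
  have hzero : (fwdDiff (1 : ℝ))^[k] (fun x => dfall lam x n) = fun _ => 0 := by
    have : (fun x => dfall lam x n) = fun x => P.eval x := by
      funext x; rw [hPeval]
    rw [this]
    apply fwdDiff_iter_poly_degree_lt
    rw [hPdeg]
    exact_mod_cast hnk
  have hF := fwdDiff_iter_eq_sum_shift (1 : ℝ) (fun x => dfall lam x n) k (-(k : ℝ) / 2)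
  rw [hzero] at hF
  have h0 : (0 : ℝ) = ∑ l ∈ Finset.range (k + 1),
      ((-1 : ℤ) ^ (k - l) * (k.choose l : ℤ)) • dfall lam (-(k : ℝ) / 2 + l • (1 : ℝ)) n := hF
  calc ∑ l ∈ Finset.range (k + 1),
        (k.choose l : ℝ) * (-1) ^ (k - l) * dfall lam ((l : ℝ) - (k : ℝ) / 2) n
      = ∑ l ∈ Finset.range (k + 1),
        ((-1 : ℤ) ^ (k - l) * (k.choose l : ℤ)) • dfall lam (-(k : ℝ) / 2 + l • (1 : ℝ)) n := by
        apply Finset.sum_congr rfl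
        intro l _
        have harg : -(k : ℝ) / 2 + l • (1 : ℝ) = (l : ℝ) - (k : ℝ) / 2 := by
          simp; ring
        rw [harg, zsmul_eq_mul]
        push_cast
        ring
    _ = 0 := h0.symm

theorem T2_num_explicit (lam : ℝ) (hlam : lam ≠ 0) (n k : ℕ) :
    (n.factorial : ℝ) / (k.factorial : ℝ) *
        ∑ l ∈ Finset.range (k + 1),
          (k.choose l : ℝ) * (-1) ^ (k - l) *
            (dfall lam ((l : ℝ) - (k : ℝ) / 2) n / (n.factorial : ℝ))
      = if k ≤ n then T2 lam 0 n k else 0 := by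
  have hn : (n.factorial : ℝ) ≠ 0 := Nat.cast_ne_zero.mpr n.factorial_ne_zero
  have hk : (k.factorial : ℝ) ≠ 0 := Nat.cast_ne_zero.mpr k.factorial_ne_zero
  have hL : (n.factorial : ℝ) / (k.factorial : ℝ) *
        ∑ l ∈ Finset.range (k + 1),
          (k.choose l : ℝ) * (-1) ^ (k - l) *
            (dfall lam ((l : ℝ) - (k : ℝ) / 2) n / (n.factorial : ℝ))
      = (k.factorial : ℝ)⁻¹ * ∑ l ∈ Finset.range (k + 1),
          (k.choose l : ℝ) * (-1) ^ (k - l) * dfall lam ((l : ℝ) - (k : ℝ) / 2) n := by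
    rw [Finset.mul_sum, Finset.mul_sum]
    apply Finset.sum_congr rfl
    intro l _
    field_simp
  rw [hL]
  by_cases h : k ≤ n
  · rw [if_pos h, T2_eq lam hlam n k, Finset.mul_sum]
    apply Finset.sum_congr rfl
    intro l hl
    have hl' : l ≤ k := Nat.lt_succ_iff.mp (Finset.mem_range.mp hl)
    have hsign : ((-1 : ℝ)) ^ (l + k) = (-1) ^ (k - l) := by
      have : l + k = (k - l) + 2 * l := by omega
      rw [this, pow_add, pow_mul]
      simp
    rw [hsign]
    ring
  · rw [if_neg h, sum_vanish lam n k (not_le.mp h), mul_zero]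
end

section
/- For nonnegative integers n, k, the sum Σ_{l=0}^k Σ_{i=l}^n C(n,i)·S_{2,λ}(i,l)·S_{2,-λ}(n-i,k-l)·(-1)^{n-i} equals k!·C(2k,k)·T_{2,λ}(n,2k) if n ≥ 2k and 0 if n < 2k. -/
open Filter Finset

private lemma itd_cmul (c : ℝ) {f : ℝ → ℝ} {n : ℕ} (hf : ContDiff ℝ n f) :
    iteratedDeriv n (fun y => c * f y) = fun x => c * iteratedDeriv n f x := by
  induction n with
  | zero => simp [iteratedDeriv_zero]
  | succ n ih =>
    funext x
    rw [iteratedDeriv_succ, ih hf.of_succ, iteratedDeriv_succ]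
    exact deriv_const_mul c
      ((hf.differentiable_iteratedDeriv n (Nat.cast_lt.mpr n.lt_succ_self)) x)

private lemma itd_sum {ι : Type*} (s : Finset ι) (F : ι → ℝ → ℝ) {n : ℕ}
    (hF : ∀ i ∈ s, ContDiff ℝ n (F i)) :
    iteratedDeriv n (fun y => ∑ i ∈ s, F i y) = fun x => ∑ i ∈ s, iteratedDeriv n (F i) x := by
  induction n with
  | zero => simp [iteratedDeriv_zero]
  | succ n ih =>
    funext x
    rw [iteratedDeriv_succ, ih (fun i hi => (hF i hi).of_succ),
      deriv_fun_sum (fun i hi => ((hF i hi).differentiable_iteratedDeriv n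
        (Nat.cast_lt.mpr n.lt_succ_self)) x)]
    simp only [← iteratedDeriv_succ]

private lemma itd_mul {n : ℕ} {f g : ℝ → ℝ} (hf : ContDiff ℝ n f) (hg : ContDiff ℝ n g) :
    iteratedDeriv n (fun y => f y * g y)
      = fun x => ∑ i ∈ Finset.range (n + 1),
          (n.choose i : ℝ) * iteratedDeriv i f x * iteratedDeriv (n - i) g x := by
  induction n with
  | zero => simp [iteratedDeriv_zero]
  | succ n ih =>
    funext x
    have hdf : ∀ m : ℕ, m ≤ n → DifferentiableAt ℝ (iteratedDeriv m f) x := fun m hm =>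
      (hf.differentiable_iteratedDeriv m (Nat.cast_lt.mpr (by omega))) x
    have hdg : ∀ m : ℕ, m ≤ n → DifferentiableAt ℝ (iteratedDeriv m g) x := fun m hm =>
      (hg.differentiable_iteratedDeriv m (Nat.cast_lt.mpr (by omega))) x
    rw [iteratedDeriv_succ, ih hf.of_succ hg.of_succ,
      deriv_fun_sum (fun i hi => by
        have hi' : i ≤ n := Nat.lt_succ_iff.mp (Finset.mem_range.mp hi)
        exact (((hdf i (by omega)).const_mul _).mul (hdg (n - i) (by omega))))]
    have hterm : ∀ i ∈ Finset.range (n + 1),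
        deriv (fun y => (n.choose i : ℝ) * iteratedDeriv i f y * iteratedDeriv (n - i) g y) x
          = (n.choose i : ℝ) * iteratedDeriv (i+1) f x * iteratedDeriv (n - i) g x
            + (n.choose i : ℝ) * iteratedDeriv i f x * iteratedDeriv (n - i + 1) g x := by
      intro i hi
      have hi' : i ≤ n := Nat.lt_succ_iff.mp (Finset.mem_range.mp hi)
      rw [deriv_fun_mul ((hdf i (by omega)).const_mul _) (hdg (n - i) (by omega)),
        deriv_const_mul _ (hdf i (by omega)), ← iteratedDeriv_succ, ← iteratedDeriv_succ]
    rw [Finset.sum_congr rfl hterm, Finset.sum_add_distrib]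
    -- abbreviations
    set a : ℕ → ℝ := fun i => iteratedDeriv i f x with ha
    set b : ℕ → ℝ := fun j => iteratedDeriv j g x with hb
    have h2 : ∑ i ∈ Finset.range (n + 1), (n.choose i : ℝ) * a i * b (n - i + 1)
        = ∑ i ∈ Finset.range (n + 1), (n.choose i : ℝ) * a i * b (n + 1 - i) := by
      refine Finset.sum_congr rfl fun i hi => ?_
      have hi' : i ≤ n := Nat.lt_succ_iff.mp (Finset.mem_range.mp hi)
      rw [show n - i + 1 = n + 1 - i by omega]
    rw [h2]
    rw [Finset.sum_range_succ' (fun i => ((n+1).choose i : ℝ) * a i * b (n + 1 - i)) (n+1)]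
    have h3 : ∀ i ∈ Finset.range (n + 1),
        (((n+1).choose (i+1) : ℕ) : ℝ) * a (i+1) * b (n + 1 - (i+1))
          = (n.choose i : ℝ) * a (i+1) * b (n - i)
            + (n.choose (i+1) : ℝ) * a (i+1) * b (n + 1 - (i+1)) := by
      intro i hi
      have hi' : i ≤ n := Nat.lt_succ_iff.mp (Finset.mem_range.mp hi)
      rw [Nat.choose_succ_succ]
      push_cast [Nat.succ_eq_add_one]
      ring
    rw [Finset.sum_congr rfl h3, Finset.sum_add_distrib]
    have h4 : ∑ i ∈ Finset.range (n + 1), (n.choose (i+1) : ℝ) * a (i+1) * b (n + 1 - (i+1))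
          + ((n+1).choose 0 : ℝ) * a 0 * b (n + 1 - 0)
        = ∑ i ∈ Finset.range (n + 1), (n.choose i : ℝ) * a i * b (n + 1 - i) := by
      have hstep := Finset.sum_range_succ (fun i => (n.choose i : ℝ) * a i * b (n + 1 - i)) (n+1)
      have hzero : (n.choose (n+1) : ℝ) * a (n+1) * b (n + 1 - (n+1)) = 0 := by
        simp [Nat.choose_succ_self]
      have hkey := Finset.sum_range_succ' (fun i => (n.choose i : ℝ) * a i * b (n + 1 - i)) (n+1)
      rw [hstep, hzero, add_zero] at hkey
      rw [show (((n+1).choose 0 : ℕ) : ℝ) = ((n.choose 0 : ℕ) : ℝ) by norm_num, ← hkey]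
    rw [add_assoc, h4]

open Filter Finset Topology

private lemma exists_global {f : ℝ → ℝ} {x : ℝ} {n : ℕ} (hf : ContDiffAt ℝ n f x) :
    ∃ g : ℝ → ℝ, ContDiff ℝ n g ∧ g =ᶠ[𝓝 x] f := by
  obtain ⟨u, hu, hfu⟩ := hf.contDiffOn le_rfl (by simp)
  have hx : interior u ∈ 𝓝 x := interior_mem_nhds.mpr hu
  obtain ⟨ε, hε, hball⟩ := Metric.nhds_basis_closedBall.mem_iff.mp hx
  set φ : ContDiffBump x := ⟨ε/2, ε, by positivity, by linarith⟩ with hφ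
  refine ⟨fun y => φ y * f y, ?_, ?_⟩
  · rw [← contDiffOn_univ]
    apply contDiffOn_of_locally_contDiffOn
    intro y _
    by_cases hy : y ∈ interior u
    · exact ⟨interior u, isOpen_interior, hy,
        ((φ.contDiff.contDiffOn).mono Set.inter_subset_right).mul
          (((hfu.mono interior_subset)).mono Set.inter_subset_right)⟩
    · refine ⟨(tsupport ⇑φ)ᶜ, (isClosed_tsupport _).isOpen_compl, ?_, ?_⟩
      · intro hy'
        rw [φ.tsupport_eq] at hy'
        exact hy (hball hy')
      · apply (contDiffOn_const (c := (0:ℝ))).congr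
        intro z hz
        have : z ∉ tsupport ⇑φ := hz.2
        simp [image_eq_zero_of_notMem_tsupport this]
  · filter_upwards [φ.eventuallyEq_one] with y hy
    simp [hy]
private lemma itd_mul_at {f g : ℝ → ℝ} {x : ℝ} (n : ℕ)
    (hf : ContDiffAt ℝ n f x) (hg : ContDiffAt ℝ n g x) :
    iteratedDeriv n (fun y => f y * g y) x
      = ∑ i ∈ Finset.range (n + 1),
          (n.choose i : ℝ) * iteratedDeriv i f x * iteratedDeriv (n - i) g x := by
  obtain ⟨f', hf', hfe⟩ := exists_global hf
  obtain ⟨g', hg', hge⟩ := exists_global hg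
  have h1 : (fun y => f y * g y) =ᶠ[𝓝 x] fun y => f' y * g' y := by
    filter_upwards [hfe, hge] with y h h'
    rw [h, h']
  rw [Filter.EventuallyEq.iteratedDeriv_eq n h1, itd_mul hf' hg']
  exact Finset.sum_congr rfl fun i hi => by
    rw [hfe.iteratedDeriv_eq i, hge.iteratedDeriv_eq (n - i)]

private lemma itd_cmul_at (c : ℝ) {f : ℝ → ℝ} {x : ℝ} (n : ℕ) (hf : ContDiffAt ℝ n f x) :
    iteratedDeriv n (fun y => c * f y) x = c * iteratedDeriv n f x := by
  obtain ⟨f', hf', hfe⟩ := exists_global hf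
  have h1 : (fun y => c * f y) =ᶠ[𝓝 x] fun y => c * f' y := by
    filter_upwards [hfe] with y h; rw [h]
  rw [Filter.EventuallyEq.iteratedDeriv_eq n h1, itd_cmul c hf']
  simp only []
  rw [hfe.iteratedDeriv_eq n]

private lemma itd_sum_at {ι : Type*} (s : Finset ι) (F : ι → ℝ → ℝ) {x : ℝ} {n : ℕ}
    (hF : ∀ i ∈ s, ContDiffAt ℝ n (F i) x) :
    iteratedDeriv n (fun y => ∑ i ∈ s, F i y) x = ∑ i ∈ s, iteratedDeriv n (F i) x := by
  choose G hG hGe using fun (i : s) => exists_global (hF i i.2)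
  have h1 : (fun y => ∑ i ∈ s, F i y) =ᶠ[𝓝 x] fun y => ∑ i ∈ s.attach, G i y := by
    have : ∀ᶠ y in 𝓝 x, ∀ i : s, G i y = F i y := by
      rw [Filter.eventually_all]
      exact fun i => hGe i
    filter_upwards [this] with y hy
    rw [← Finset.sum_attach s (fun i => F i y)]
    exact (Finset.sum_congr rfl fun i _ => (hy i).symm)
  rw [Filter.EventuallyEq.iteratedDeriv_eq n h1, itd_sum s.attach G (fun i _ => hG i)]
  rw [← Finset.sum_attach s (fun i => iteratedDeriv n (F i) x)]
  exact Finset.sum_congr rfl fun i _ => ((hGe i).iteratedDeriv_eq n)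

private lemma vanish_mul {f g : ℝ → ℝ} {x : ℝ} {a b : ℕ}
    (hf : ∀ N : ℕ, ContDiffAt ℝ N f x) (hg : ∀ N : ℕ, ContDiffAt ℝ N g x)
    (ha : ∀ j, j < a → iteratedDeriv j f x = 0) (hb : ∀ j, j < b → iteratedDeriv j g x = 0) :
    ∀ n, n < a + b → iteratedDeriv n (fun y => f y * g y) x = 0 := by
  intro n hn
  rw [itd_mul_at n (hf n) (hg n)]
  apply Finset.sum_eq_zero
  intro i hi
  have hi' : i ≤ n := Nat.lt_succ_iff.mp (Finset.mem_range.mp hi)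
  rcases lt_or_ge i a with h | h
  · rw [ha i h]; ring
  · rw [hb (n - i) (by omega)]; ring

private lemma vanish_pow {f : ℝ → ℝ} {x : ℝ} (hf : ∀ N : ℕ, ContDiffAt ℝ N f x)
    (h0 : f x = 0) : ∀ m : ℕ, ∀ n, n < m → iteratedDeriv n (fun y => f y ^ m) x = 0 := by
  intro m
  induction m with
  | zero => omega
  | succ m ih =>
    intro n hn
    have hfun : (fun y => f y ^ (m + 1)) = fun y => f y * f y ^ m := by
      funext y; ring
    rw [hfun]
    refine vanish_mul (a := 1) (b := m) hf (fun N => (hf N).pow m) ?_ ih n (by omega)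
    intro j hj
    interval_cases j
    simpa [iteratedDeriv_zero] using h0
noncomputable def S2d (lam : ℝ) (n k : ℕ) : ℝ :=
  iteratedDeriv n (fun t : ℝ =>
    (k.factorial : ℝ)⁻¹ * ((1 + lam * t) ^ (1 / lam) - 1) ^ k) 0

private noncomputable def Af (lam : ℝ) : ℝ → ℝ := fun t => (1 + lam * t) ^ (1 / lam) - 1

private noncomputable def Bf (lam : ℝ) : ℝ → ℝ := fun t => (1 + lam * t) ^ (1 / (-lam)) - 1

private noncomputable def Vf (lam : ℝ) : ℝ → ℝ :=
  fun t => (1 + lam * t) ^ (1 / (2 * lam)) - (1 + lam * t) ^ (-(1 / (2 * lam)))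

private noncomputable def Ff (lam : ℝ) (l : ℕ) : ℝ → ℝ :=
  fun t => (l.factorial : ℝ)⁻¹ * (Af lam t) ^ l

private noncomputable def Hf (lam : ℝ) (j : ℕ) : ℝ → ℝ :=
  fun t => (j.factorial : ℝ)⁻¹ * (Bf lam t) ^ j

private lemma S2d_eq (lam : ℝ) (i l : ℕ) : S2d lam i l = iteratedDeriv i (Ff lam l) 0 := rfl

private lemma itd_H (lam : ℝ) (m j : ℕ) :
    iteratedDeriv m (Hf lam j) 0 = (-1 : ℝ) ^ m * S2d (-lam) m j := by
  have h : Hf lam j = fun t => (Ff (-lam) j) (-t) := by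
    funext t
    simp only [Hf, Ff, Af, Bf]
    ring_nf
  rw [h, iteratedDeriv_comp_neg m (Ff (-lam) j) 0, neg_zero, smul_eq_mul, S2d_eq]

theorem T2_even_via_lambda_stirling (lam : ℝ) (hlam : lam ≠ 0) (n k : ℕ) :
    ∑ l ∈ Finset.range (k + 1), ∑ i ∈ Finset.Icc l n,
        (n.choose i : ℝ) * S2d lam i l * S2d (-lam) (n - i) (k - l) * (-1) ^ (n - i)
      = if 2 * k ≤ n then (k.factorial : ℝ) * ((2 * k).choose k : ℝ) * T2 lam 0 n (2 * k)
        else 0 := by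
  have hbase : ∀ (e : ℝ) (N : ℕ), ContDiffAt ℝ N (fun t : ℝ => (1 + lam * t) ^ e) 0 := by
    intro e N
    have h : ContDiffAt ℝ N (fun t : ℝ => 1 + lam * t) 0 :=
      (contDiff_const.add (contDiff_const.mul contDiff_id)).contDiffAt
    exact h.rpow_const_of_ne (by simp)
  have hA : ∀ N : ℕ, ContDiffAt ℝ N (Af lam) 0 := fun N => by
    unfold Af; exact (hbase _ N).sub contDiffAt_const
  have hB : ∀ N : ℕ, ContDiffAt ℝ N (Bf lam) 0 := fun N => by
    unfold Bf; exact (hbase _ N).sub contDiffAt_const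
  have hV : ∀ N : ℕ, ContDiffAt ℝ N (Vf lam) 0 := fun N => by
    unfold Vf; exact (hbase _ N).sub (hbase _ N)
  have hA0 : Af lam 0 = 0 := by simp [Af]
  have hV0 : Vf lam 0 = 0 := by simp [Vf]
  have hFc : ∀ (l N : ℕ), ContDiffAt ℝ N (Ff lam l) 0 := fun l N => by
    unfold Ff; exact contDiffAt_const.mul ((hA N).pow l)
  have hHc : ∀ (j N : ℕ), ContDiffAt ℝ N (Hf lam j) 0 := fun j N => by
    unfold Hf; exact contDiffAt_const.mul ((hB N).pow j)
  have hSvan : ∀ i l : ℕ, i < l → S2d lam i l = 0 := by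
    intro i l hil
    rw [S2d_eq]
    unfold Ff
    rw [itd_cmul_at _ i ((hA i).pow l), vanish_pow hA hA0 l i hil, mul_zero]
  -- the inner sums as iterated derivatives of products
  have hinner : ∀ l, l ≤ k →
      (∑ i ∈ Finset.Icc l n, (n.choose i : ℝ) * S2d lam i l * S2d (-lam) (n - i) (k - l)
        * (-1) ^ (n - i))
      = iteratedDeriv n (fun t => Ff lam l t * Hf lam (k - l) t) 0 := by
    intro l hl
    have hsub : Finset.Icc l n ⊆ Finset.range (n + 1) := by
      intro i hi
      simp only [Finset.mem_Icc] at hi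
      exact Finset.mem_range.mpr (by omega)
    have hvan : ∀ i ∈ Finset.range (n + 1), i ∉ Finset.Icc l n →
        (n.choose i : ℝ) * S2d lam i l * S2d (-lam) (n - i) (k - l) * (-1) ^ (n - i) = 0 := by
      intro i hi hni
      simp only [Finset.mem_range] at hi
      simp only [Finset.mem_Icc, not_and, not_le] at hni
      have : i < l := by omega
      rw [hSvan i l this]; ring
    rw [Finset.sum_subset hsub hvan, itd_mul_at n (hFc l n) (hHc (k - l) n)]
    apply Finset.sum_congr rfl
    intro i hi
    rw [S2d_eq lam i l, itd_H lam (n - i) (k - l)]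
    ring
  have hsum : (∑ l ∈ Finset.range (k + 1), ∑ i ∈ Finset.Icc l n,
        (n.choose i : ℝ) * S2d lam i l * S2d (-lam) (n - i) (k - l) * (-1) ^ (n - i))
      = iteratedDeriv n (fun t => ∑ l ∈ Finset.range (k + 1), Ff lam l t * Hf lam (k - l) t) 0 := by
    rw [itd_sum_at (Finset.range (k + 1)) (fun l t => Ff lam l t * Hf lam (k - l) t)
      (fun l _ => (hFc l n).mul (hHc (k - l) n))]
    exact Finset.sum_congr rfl fun l hl => hinner l (Nat.lt_succ_iff.mp (Finset.mem_range.mp hl))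
  have hfact : ∀ m : ℕ, ((m.factorial : ℝ)) ≠ 0 := fun m =>
    Nat.cast_ne_zero.mpr m.factorial_ne_zero
  -- eventual identity near 0
  have hev : (fun t => ∑ l ∈ Finset.range (k + 1), Ff lam l t * Hf lam (k - l) t)
      =ᶠ[𝓝 (0 : ℝ)] fun t => ((k.factorial : ℝ) * ((2 * k).choose k : ℝ))
        * (((2 * k).factorial : ℝ)⁻¹ * Vf lam t ^ (2 * k)) := by
    have hO : IsOpen {t : ℝ | 0 < 1 + lam * t} :=
      isOpen_lt continuous_const (continuous_const.add (continuous_const.mul continuous_id))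
    have h0m : (0 : ℝ) ∈ {t : ℝ | 0 < 1 + lam * t} := by norm_num
    filter_upwards [hO.mem_nhds h0m] with t ht
    have ht' : (0 : ℝ) < 1 + lam * t := ht
    -- square identity
    have e1 : (1 + lam * t) ^ (1 / (2 * lam)) * (1 + lam * t) ^ (1 / (2 * lam))
        = (1 + lam * t) ^ (1 / lam) := by
      rw [← Real.rpow_add ht']
      congr 1
      field_simp
      norm_num
    have e2 : (1 + lam * t) ^ (1 / (2 * lam)) * (1 + lam * t) ^ (-(1 / (2 * lam))) = 1 := by
      rw [← Real.rpow_add ht', add_neg_cancel, Real.rpow_zero]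
    have e3 : (1 + lam * t) ^ (-(1 / (2 * lam))) * (1 + lam * t) ^ (-(1 / (2 * lam)))
        = (1 + lam * t) ^ (1 / (-lam)) := by
      rw [← Real.rpow_add ht']
      congr 1
      field_simp
      norm_num
    have hv2 : Vf lam t ^ 2 = Af lam t + Bf lam t := by
      have expand : Vf lam t ^ 2
          = (1 + lam * t) ^ (1 / (2 * lam)) * (1 + lam * t) ^ (1 / (2 * lam))
            - 2 * ((1 + lam * t) ^ (1 / (2 * lam)) * (1 + lam * t) ^ (-(1 / (2 * lam))))
            + (1 + lam * t) ^ (-(1 / (2 * lam))) * (1 + lam * t) ^ (-(1 / (2 * lam))) := by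
        simp only [Vf]; ring
      rw [expand, e1, e2, e3]
      simp only [Af, Bf]
      ring
    have hsum2 : ∑ l ∈ Finset.range (k + 1), Ff lam l t * Hf lam (k - l) t
        = (k.factorial : ℝ)⁻¹ * (Af lam t + Bf lam t) ^ k := by
      rw [add_pow, Finset.mul_sum]
      apply Finset.sum_congr rfl
      intro l hl
      have hlk : l ≤ k := Nat.lt_succ_iff.mp (Finset.mem_range.mp hl)
      have hfac : (k.choose l * l.factorial * (k - l).factorial : ℕ) = k.factorial :=
        Nat.choose_mul_factorial_mul_factorial hlk
      have hcast : (k.choose l : ℝ) * (l.factorial : ℝ) * ((k - l).factorial : ℝ)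
          = (k.factorial : ℝ) := by exact_mod_cast hfac
      have hC : (k.choose l : ℝ) ≠ 0 := Nat.cast_ne_zero.mpr (Nat.choose_pos hlk).ne'
      have hco : (l.factorial : ℝ)⁻¹ * ((k - l).factorial : ℝ)⁻¹
          = (k.factorial : ℝ)⁻¹ * (k.choose l : ℝ) := by
        rw [← hcast]
        field_simp
      simp only [Ff, Hf]
      calc (l.factorial : ℝ)⁻¹ * Af lam t ^ l * (((k - l).factorial : ℝ)⁻¹ * Bf lam t ^ (k - l))
          = ((l.factorial : ℝ)⁻¹ * ((k - l).factorial : ℝ)⁻¹)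
            * (Af lam t ^ l * Bf lam t ^ (k - l)) := by ring
        _ = (k.factorial : ℝ)⁻¹ * (Af lam t ^ l * Bf lam t ^ (k - l) * (k.choose l : ℝ)) := by
            rw [hco]; ring
    have hVpow : (Af lam t + Bf lam t) ^ k = Vf lam t ^ (2 * k) := by
      rw [← hv2, ← pow_mul]
    have hc2 : ((2 * k).choose k : ℝ) * (k.factorial : ℝ) * (k.factorial : ℝ)
        = ((2 * k).factorial : ℝ) := by
      have := Nat.choose_mul_factorial_mul_factorial (show k ≤ 2 * k by omega)
      rw [show 2 * k - k = k by omega] at this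
      exact_mod_cast this
    have hC2 : ((2 * k).choose k : ℝ) ≠ 0 :=
      Nat.cast_ne_zero.mpr (Nat.choose_pos (by omega)).ne'
    have hcoef : (k.factorial : ℝ)⁻¹
        = (k.factorial : ℝ) * ((2 * k).choose k : ℝ) * ((2 * k).factorial : ℝ)⁻¹ := by
      rw [← hc2]
      field_simp
    rw [hsum2, hVpow, hcoef]
    ring
  rw [hsum, Filter.EventuallyEq.iteratedDeriv_eq n hev,
    itd_cmul_at _ n (contDiffAt_const.mul ((hV n).pow (2 * k)))]
  have hT2 : T2 lam 0 n (2 * k)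
      = iteratedDeriv n (fun t => ((2 * k).factorial : ℝ)⁻¹ * Vf lam t ^ (2 * k)) 0 := by
    unfold T2 Vf
    congr 1
    funext t
    rw [zero_div, Real.rpow_zero, mul_one]
  split_ifs with h
  · rw [hT2]
  · rw [itd_cmul_at _ n ((hV n).pow (2 * k)),
      vanish_pow hV hV0 (2 * k) n (by omega), mul_zero, mul_zero]
end
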